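/- Let φ be an oracle for a point x in an effective topology (B, ν) with a recursively enumerable subset relation. Then there exists a complete oracle ψ for x in (B, ν) that is recursive relative to φ, uniformly in φ. -/

import Mathlib

/-- Cantor's pairing function `⟨x,y⟩ = (x² + 2xy + y² + 3x + y)/2`. -/
def cantorPair (x y : ℕ) : ℕ := (x * x + 2 * x * y + y * y + 3 * x + y) / 2

/-- Partial functions `ℕ →. ℕ` that are computable uniformly relative to an oracle:
`PartrecIn F` says that the functional `O ↦ F O` is computed by a single oracle machine,
so that `F O` is partial recursive relative to `O`, uniformly in the oracle `O`. -/
inductive PartrecIn : ((ℕ →. ℕ) → ℕ →. ℕ) → Prop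
  | oracle : PartrecIn fun O => O
  | zero : PartrecIn fun _ => pure 0
  | succ : PartrecIn fun _ => ↑Nat.succ
  | left : PartrecIn fun _ => ↑fun n : ℕ => n.unpair.1
  | right : PartrecIn fun _ => ↑fun n : ℕ => n.unpair.2
  | pair {F G} : PartrecIn F → PartrecIn G →
      PartrecIn fun O n => Nat.pair <$> F O n <*> G O n
  | comp {F G} : PartrecIn F → PartrecIn G →
      PartrecIn fun O n => G O n >>= F O
  | prec {F G} : PartrecIn F → PartrecIn G →
      PartrecIn fun O => Nat.unpaired fun a n =>
        n.rec (F O a) fun y IH => do let i ← IH; G O (Nat.pair a (Nat.pair y i))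
  | rfind {F} : PartrecIn F →
      PartrecIn fun O a => Nat.rfind fun n => (fun m => m = 0) <$> F O (Nat.pair a n)

/-- `L` is a local basis for the point `x` with respect to the basis `Bas`. -/
def IsLocalBasis {X : Type*} (Bas : Set (Set X)) (L : Set (Set X)) (x : X) : Prop :=
  L ⊆ Bas ∧ (∀ l ∈ L, x ∈ l) ∧ ∀ b ∈ Bas, x ∈ b → ∃ l ∈ L, l ⊆ b

/-- `φ : ℕ → dom` is an oracle for the point `x` in the effective topology whose basis
is coded by `code` on the domain `dom`: the image under `code` of the range of `φ`
is a local basis for `x`. -/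
def IsOracleFor {X : Type*} (dom : Set ℕ) (code : ℕ → Set X) (x : X) (φ : ℕ → ℕ) : Prop :=
  (∀ n, φ n ∈ dom) ∧ IsLocalBasis (code '' dom) (code '' Set.range φ) x

/-- An oracle for `x` is complete iff every code of a basis element containing `x`
appears in its range. -/
def IsCompleteOracleFor {X : Type*} (dom : Set ℕ) (code : ℕ → Set X) (x : X)
    (φ : ℕ → ℕ) : Prop :=
  IsOracleFor dom code x φ ∧ ∀ n ∈ dom, x ∈ code n → n ∈ Set.range φ

/-- The effective topology `(B, ν)` (with `B = code '' dom`) has a recursively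
enumerable subset relation. -/
def RESubsetRel {X : Type*} (dom : Set ℕ) (code : ℕ → Set X) : Prop :=
  REPred fun p : ℕ =>
    ∃ b₁ ∈ dom, ∃ b₂ ∈ dom, p = cantorPair b₁ b₂ ∧ code b₁ ⊆ code b₂

/- ### Auxiliary material -/

theorem cantorPair_tri (x y : ℕ) {m : ℕ} (hm : (x + y) * (x + y + 1) = m + m) :
    cantorPair x y = m + x := by
  have e : x * x + 2 * x * y + y * y + 3 * x + y = m + m + 2 * x := by
    rw [← hm]; ring
  unfold cantorPair
  omega

theorem cantorPair_inj {x y a b : ℕ} (h : cantorPair x y = cantorPair a b) :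
    x = a ∧ y = b := by
  obtain ⟨m, hm⟩ := Nat.even_mul_succ_self (x + y)
  obtain ⟨m', hm'⟩ := Nat.even_mul_succ_self (a + b)
  rw [cantorPair_tri x y hm, cantorPair_tri a b hm'] at h
  have hs : x + y = a + b := by
    rcases lt_trichotomy (x + y) (a + b) with hlt | he | hgt
    · exfalso
      have h1 : (x + y + 1) * (x + y + 2) ≤ (a + b) * (a + b + 1) :=
        Nat.mul_le_mul hlt (by omega)
      nlinarith [hm, hm', h]
    · exact he
    · exfalso
      have h1 : (a + b + 1) * (a + b + 2) ≤ (x + y) * (x + y + 1) :=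
        Nat.mul_le_mul hgt (by omega)
      nlinarith [hm, hm', h]
  have hmm : m = m' := by
    have : (x + y) * (x + y + 1) = (a + b) * (a + b + 1) := by rw [hs]
    omega
  omega

open Nat.Partrec (Code)
open Nat.Partrec.Code

/-- The total step function used to build the complete oracle. -/
def gAux (c : Code) (p : ℕ) : ℕ :=
  bif (evaln p.unpair.2.unpair.2.unpair.2 c
        (cantorPair p.unpair.1 p.unpair.2.unpair.2.unpair.1.unpair.2)).isSome
  then p.unpair.2.unpair.2.unpair.1.unpair.2
  else p.unpair.2.unpair.1

theorem cantorPair_primrec : Primrec₂ cantorPair := by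
  have hx : Primrec fun p : ℕ × ℕ => p.1 := Primrec.fst
  have hy : Primrec fun p : ℕ × ℕ => p.2 := Primrec.snd
  exact (Primrec.nat_div.comp
    (Primrec.nat_add.comp (Primrec.nat_add.comp (Primrec.nat_add.comp (Primrec.nat_add.comp
      (Primrec.nat_mul.comp hx hx)
      (Primrec.nat_mul.comp (Primrec.nat_mul.comp (Primrec.const 2) hx) hy))
      (Primrec.nat_mul.comp hy hy))
      (Primrec.nat_mul.comp (Primrec.const 3) hx))
      hy)
    (Primrec.const 2)).to₂

theorem gAux_primrec (c : Code) : Primrec (gAux c) := by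
  have u1 : Primrec fun n : ℕ => n.unpair.1 := Primrec.fst.comp Primrec.unpair
  have u2 : Primrec fun n : ℕ => n.unpair.2 := Primrec.snd.comp Primrec.unpair
  have ht : Primrec fun p : ℕ => p.unpair.2.unpair.2.unpair.2 :=
    u2.comp (u2.comp u2)
  have hn : Primrec fun p : ℕ => p.unpair.2.unpair.2.unpair.1.unpair.2 :=
    u2.comp (u1.comp (u2.comp u2))
  have hfk : Primrec fun p : ℕ => p.unpair.1 := u1
  have hf0 : Primrec fun p : ℕ => p.unpair.2.unpair.1 := u1.comp u2
  have harg : Primrec fun p : ℕ => cantorPair p.unpair.1 p.unpair.2.unpair.2.unpair.1.unpair.2 :=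
    cantorPair_primrec.comp hfk hn
  have hcheck : Primrec fun p : ℕ =>
      (evaln p.unpair.2.unpair.2.unpair.2 c
        (cantorPair p.unpair.1 p.unpair.2.unpair.2.unpair.1.unpair.2)).isSome :=
    Primrec.option_isSome.comp
      (primrec_evaln.comp ((ht.pair (Primrec.const c)).pair harg))
  exact Primrec.cond hcheck hn hf0

theorem PartrecIn.of_eq {F G : (ℕ →. ℕ) → ℕ →. ℕ} (hF : PartrecIn F)
    (h : ∀ O n, F O n = G O n) : PartrecIn G := by
  have : F = G := funext fun O => funext (h O)
  exact this ▸ hF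

theorem PartrecIn.of_partrec {f : ℕ →. ℕ} (hf : Nat.Partrec f) :
    PartrecIn fun _ => f := by
  induction hf with
  | zero => exact .zero
  | succ => exact .succ
  | left => exact .left
  | right => exact .right
  | pair _ _ ihf ihg => exact .pair ihf ihg
  | comp _ _ ihf ihg => exact .comp ihf ihg
  | prec _ _ ihf ihg => exact .prec ihf ihg
  | rfind _ ihf => exact .rfind ihf

theorem nat_partrec_of_computable {f : ℕ → ℕ} (hf : Computable f) :
    Nat.Partrec ↑f := Partrec.nat_iff.mp hf.partrec

theorem PartrecIn.oracle_comp {f : ℕ → ℕ} (hf : Computable f) :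
    PartrecIn fun O n => O (f n) :=
  (PartrecIn.comp .oracle (.of_partrec (nat_partrec_of_computable hf))).of_eq
    (fun O n => by simp [PFun.coe_val]; exact Part.bind_some _ _)

theorem PartrecIn.oracle_zero : PartrecIn fun O (_ : ℕ) => O 0 :=
  (PartrecIn.comp .oracle .zero).of_eq (fun O n => by
    show (PFun.pure 0 : ℕ →. ℕ) n >>= O = O 0
    simp [PFun.pure, Part.bind_some]; exact Part.bind_some _ _)

theorem PartrecIn.some_id : PartrecIn fun (_ : ℕ →. ℕ) (n : ℕ) => (Part.some n : Part ℕ) :=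
  (PartrecIn.pair .left .right).of_eq (fun O n => by
    simp [Seq.seq, PFun.coe_val, Nat.pair_unpair])

/-- Let `φ` be an oracle for a point `x` in an effective topology `(B, ν)`
with a recursively enumerable subset relation.  Then there exists a complete oracle `ψ`
for `x` in `(B, ν)` that is recursive relative to `φ`, uniformly in `φ`. -/
theorem complete_oracle_of_oracle {X : Type*} [TopologicalSpace X] [T0Space X]
    (dom : Set ℕ) (code : ℕ → Set X)
    (hbasis : TopologicalSpace.IsTopologicalBasis (code '' dom))
    (hre : RESubsetRel dom code) :
    ∃ F : (ℕ →. ℕ) → ℕ →. ℕ, PartrecIn F ∧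
      ∀ (x : X) (φ : ℕ → ℕ), IsOracleFor dom code x φ →
        ∃ ψ : ℕ → ℕ, (∀ n, F (fun k => Part.some (φ k)) n = Part.some (ψ n)) ∧
          IsCompleteOracleFor dom code x ψ := by
  classical
  have hre' : Partrec fun p : ℕ => Part.assert
      (∃ b₁ ∈ dom, ∃ b₂ ∈ dom, p = cantorPair b₁ b₂ ∧ code b₁ ⊆ code b₂)
      fun _ => Part.some () := hre
  have hq : Partrec fun p : ℕ => (Part.assert
      (∃ b₁ ∈ dom, ∃ b₂ ∈ dom, p = cantorPair b₁ b₂ ∧ code b₁ ⊆ code b₂)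
      fun _ => Part.some ()).map fun _ => (0 : ℕ) :=
    hre'.map ((Computable.const 0).to₂)
  obtain ⟨c, hc⟩ := exists_code.mp (Partrec.nat_iff.mp hq)
  have hkey : ∀ y : ℕ,
      (∃ t, (evaln t c y).isSome = true) ↔
      (∃ b₁ ∈ dom, ∃ b₂ ∈ dom, y = cantorPair b₁ b₂ ∧ code b₁ ⊆ code b₂) := by
    intro y
    constructor
    · rintro ⟨t, ht⟩
      obtain ⟨v, hv⟩ := Option.isSome_iff_exists.mp ht
      have hv' : v ∈ eval c y := evaln_sound (by simpa using hv)
      rw [hc] at hv'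
      simp only [Part.mem_map_iff, Part.mem_assert_iff] at hv'
      obtain ⟨a, ⟨hP, _⟩, _⟩ := hv'
      exact hP
    · intro hP
      have h0 : (0 : ℕ) ∈ eval c y := by
        rw [hc]
        simp only [Part.mem_map_iff, Part.mem_assert_iff]
        exact ⟨(), ⟨hP, Part.mem_some _⟩, by trivial⟩
      obtain ⟨t, ht⟩ := evaln_complete.mp h0
      exact ⟨t, Option.isSome_iff_exists.mpr ⟨0, by simpa using ht⟩⟩
  refine ⟨fun O n => (Nat.pair <$> O n.unpair.1.unpair.1 <*>
      (Nat.pair <$> O 0 <*> Part.some n)) >>= fun a => Part.some (gAux c a), ?_, ?_⟩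
  · exact PartrecIn.comp (.of_partrec (nat_partrec_of_computable (gAux_primrec c).to_comp))
      (PartrecIn.pair
        (PartrecIn.oracle_comp
          ((Primrec.fst.comp (Primrec.unpair.comp (Primrec.fst.comp Primrec.unpair))).to_comp))
        (PartrecIn.pair .oracle_zero .some_id))
  · intro x φ hφ
    obtain ⟨hφdom, hLsub, hLmem, hLbase⟩ := hφ
    set ψ : ℕ → ℕ := fun m => gAux c (Nat.pair (φ m.unpair.1.unpair.1) (Nat.pair (φ 0) m))
      with hψ
    have hxφ : ∀ k, x ∈ code (φ k) := fun k => hLmem _ ⟨φ k, ⟨k, rfl⟩, rfl⟩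
    have hval : ∀ m, ψ m = φ 0 ∨
        (ψ m ∈ dom ∧ code (φ m.unpair.1.unpair.1) ⊆ code (ψ m)) := by
      intro m
      by_cases h : (evaln m.unpair.2 c
          (cantorPair (φ m.unpair.1.unpair.1) m.unpair.1.unpair.2)).isSome = true
      · right
        have hψm : ψ m = m.unpair.1.unpair.2 := by
          simp [hψ, gAux, Nat.unpair_pair, h]
        obtain ⟨b₁, hb₁, b₂, hb₂, heq, hsub⟩ := (hkey _).mp ⟨m.unpair.2, h⟩
        obtain ⟨e1, e2⟩ := cantorPair_inj heq
        refine ⟨?_, ?_⟩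
        · rw [hψm, e2]; exact hb₂
        · rw [hψm, e1, e2]; exact hsub
      · left
        have h' : (evaln m.unpair.2 c
            (cantorPair (φ m.unpair.1.unpair.1) m.unpair.1.unpair.2)).isSome = false := by
          simpa using h
        simp [hψ, gAux, Nat.unpair_pair, h']
    have hmem : ∀ n ∈ dom, x ∈ code n → n ∈ Set.range ψ := by
      intro n hn hxn
      obtain ⟨l, hl, hlsub⟩ := hLbase (code n) ⟨n, hn, rfl⟩ hxn
      obtain ⟨_, ⟨k, rfl⟩, rfl⟩ := hl
      have hP : ∃ b₁ ∈ dom, ∃ b₂ ∈ dom,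
          cantorPair (φ k) n = cantorPair b₁ b₂ ∧ code b₁ ⊆ code b₂ :=
        ⟨φ k, hφdom k, n, hn, rfl, hlsub⟩
      obtain ⟨t, ht⟩ := (hkey _).mpr hP
      refine ⟨Nat.pair (Nat.pair k n) t, ?_⟩
      simp [hψ, gAux, Nat.unpair_pair, ht]
    have hψdom : ∀ m, ψ m ∈ dom := by
      intro m; rcases hval m with h | h
      · rw [h]; exact hφdom 0
      · exact h.1
    have hψx : ∀ m, x ∈ code (ψ m) := by
      intro m; rcases hval m with h | h
      · rw [h]; exact hxφ 0
      · exact h.2 (hxφ _)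
    refine ⟨ψ, ?_, ⟨⟨hψdom, ?_, ?_, ?_⟩, hmem⟩⟩
    · intro n
      simp [hψ, Seq.seq, PFun.coe_val]
    · rintro _ ⟨_, ⟨m, rfl⟩, rfl⟩; exact ⟨ψ m, hψdom m, rfl⟩
    · rintro _ ⟨_, ⟨m, rfl⟩, rfl⟩; exact hψx m
    · rintro b ⟨n, hn, rfl⟩ hxb
      obtain ⟨m, hm⟩ := hmem n hn hxb
      exact ⟨code n, ⟨n, ⟨m, hm⟩, rfl⟩, subset_rfl⟩
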